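/- Let f be a complementary choice function on X. Then f is the union of the packaged choice functions f_K over all open sets K (i.e., sets K with f(K) = K): for all A, f(A) = ⋃_{K open, K ⊆ A} K. Equivalently, f(A) is the largest open subset of A. -/
import Mathlib


theorem stmt_4 {X : Type*} (f : Set X → Set X)
    (hchoice : ∀ A : Set X, f A ⊆ A)
    (hmono : ∀ A B : Set X, A ⊆ B → f A ⊆ f B)
    (hcons : ∀ A B : Set X, f A ⊆ B → B ⊆ A → f B = f A) :
    ∀ A : Set X,
      f A = ⋃₀ {K : Set X | f K = K ∧ K ⊆ A} ∧
      f (f A) = f A ∧ f A ⊆ A ∧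
      (∀ K : Set X, f K = K → K ⊆ A → K ⊆ f A) := by
  intro A
  have hidem : f (f A) = f A := hcons A (f A) subset_rfl (hchoice A)
  have hmax : ∀ K : Set X, f K = K → K ⊆ A → K ⊆ f A := by
    intro K hK hKA
    calc K = f K := hK.symm
    _ ⊆ f A := hmono K A hKA
  refine ⟨?_, hidem, hchoice A, hmax⟩
  apply subset_antisymm
  · exact Set.subset_sUnion_of_mem ⟨hidem, hchoice A⟩
  · intro x hx
    obtain ⟨K, ⟨hK, hKA⟩, hxK⟩ := hx
    exact hmax K hK hKA hxK
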